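/- Assume W = V (with the same norm), V is reflexive, and j : V → H is injective with dense range. Let a₁ be a bounded sesquilinear form on V × V satisfying the inf-sup condition with constant c > 0 and nondegenerate in the second component, and let d be a bounded sesquilinear form on H × V. Then the set A := {(ju, φ) ∈ H × H* : u ∈ V and a₁(u,v) + d(ju,v) = φ(jv) for all v ∈ V} is the graph of a single-valued linear operator from a subspace of H to H*, and A is a closed subset of H × H*. -/

import Mathlib

private lemma eval_cont_semilinear {𝕂 E : Type*} [RCLike 𝕂] [NormedAddCommGroup E]
    [NormedSpace 𝕂 E] (x : E) :
    Continuous fun f : E →SL[starRingEnd 𝕂] 𝕂 => f x := by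
  have : LipschitzWith ‖x‖₊ (fun f : E →SL[starRingEnd 𝕂] 𝕂 => f x) := by
    refine LipschitzWith.of_dist_le_mul fun φ ψ => ?_
    rw [dist_eq_norm, dist_eq_norm, ← ContinuousLinearMap.sub_apply]
    calc ‖(φ - ψ) x‖ ≤ ‖φ - ψ‖ * ‖x‖ := (φ - ψ).le_opNorm x
      _ = (‖x‖₊ : ℝ) * ‖φ - ψ‖ := by rw [coe_nnnorm]; ring
  exact this.continuous

private lemma comp_lipschitz {𝕂 V H : Type*} [RCLike 𝕂]
    [NormedAddCommGroup V] [NormedSpace 𝕂 V]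
    [NormedAddCommGroup H] [NormedSpace 𝕂 H] (j : V →L[𝕂] H) :
    LipschitzWith ‖j‖₊ (fun φ : H →SL[starRingEnd 𝕂] 𝕂 => φ.comp j) := by
  refine LipschitzWith.of_dist_le_mul fun φ ψ => ?_
  rw [dist_eq_norm, dist_eq_norm]
  have h : φ.comp j - ψ.comp j = (φ - ψ).comp j := by ext v; simp
  rw [h]
  calc ‖(φ - ψ).comp j‖ ≤ ‖φ - ψ‖ * ‖j‖ := ContinuousLinearMap.opNorm_comp_le _ _
    _ = (‖j‖₊ : ℝ) * ‖φ - ψ‖ := by rw [coe_nnnorm]; ring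

/-- Theorem 3.8 a): with `W = V` reflexive and `j : V → H` injective with dense range,
the relation `A = {(ju, φ) ∈ H × H* : a₁(u,v) + d(ju,v) = φ(jv) for all v ∈ V}`
is (the graph of) a single-valued linear operator from `H` to `H*`, and it is closed. -/
theorem operator_A_is_closed_linear
    {𝕂 V H : Type*} [RCLike 𝕂]
    [NormedAddCommGroup V] [NormedSpace 𝕂 V] [CompleteSpace V] [Nontrivial V]
    [NormedAddCommGroup H] [NormedSpace 𝕂 H] [CompleteSpace H]
    (hrefl : Function.Surjective ⇑(NormedSpace.inclusionInDoubleDual 𝕂 V))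
    (j : V →L[𝕂] H) (hj : Function.Injective ⇑j) (hjdense : DenseRange ⇑j)
    (a₁ : V →L[𝕂] (V →SL[starRingEnd 𝕂] 𝕂))
    (c : ℝ) (hc : 0 < c)
    (hinfsup : ∀ v : V, c * ‖v‖ ≤ ‖a₁ v‖)
    (hnondeg : ∀ w : V, (∀ v : V, a₁ v w = 0) → w = 0)
    (d : H →L[𝕂] (V →SL[starRingEnd 𝕂] 𝕂)) :
    (∀ (x : H) (φ₁ φ₂ : H →SL[starRingEnd 𝕂] 𝕂),
        (∃ u : V, x = j u ∧ ∀ v : V, a₁ u v + d (j u) v = φ₁ (j v)) →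
        (∃ u : V, x = j u ∧ ∀ v : V, a₁ u v + d (j u) v = φ₂ (j v)) → φ₁ = φ₂) ∧
    (∀ p q : H × (H →SL[starRingEnd 𝕂] 𝕂),
        p ∈ {p : H × (H →SL[starRingEnd 𝕂] 𝕂) |
              ∃ u : V, p.1 = j u ∧ ∀ v : V, a₁ u v + d (j u) v = p.2 (j v)} →
        q ∈ {p : H × (H →SL[starRingEnd 𝕂] 𝕂) |
              ∃ u : V, p.1 = j u ∧ ∀ v : V, a₁ u v + d (j u) v = p.2 (j v)} →
        p + q ∈ {p : H × (H →SL[starRingEnd 𝕂] 𝕂) |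
              ∃ u : V, p.1 = j u ∧ ∀ v : V, a₁ u v + d (j u) v = p.2 (j v)}) ∧
    (∀ (k : 𝕂) (p : H × (H →SL[starRingEnd 𝕂] 𝕂)),
        p ∈ {p : H × (H →SL[starRingEnd 𝕂] 𝕂) |
              ∃ u : V, p.1 = j u ∧ ∀ v : V, a₁ u v + d (j u) v = p.2 (j v)} →
        k • p ∈ {p : H × (H →SL[starRingEnd 𝕂] 𝕂) |
              ∃ u : V, p.1 = j u ∧ ∀ v : V, a₁ u v + d (j u) v = p.2 (j v)}) ∧
    IsClosed {p : H × (H →SL[starRingEnd 𝕂] 𝕂) |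
              ∃ u : V, p.1 = j u ∧ ∀ v : V, a₁ u v + d (j u) v = p.2 (j v)} := by
  refine ⟨?_, ?_, ?_, ?_⟩
  · rintro x φ₁ φ₂ ⟨u₁, rfl, h₁⟩ ⟨u₂, hju, h₂⟩
    have hu : u₂ = u₁ := hj hju.symm
    subst hu
    have heq : Set.EqOn ⇑φ₁ ⇑φ₂ (Set.range ⇑j) := by
      rintro _ ⟨v, rfl⟩
      exact (h₁ v).symm.trans (h₂ v)
    have hfeq := Continuous.ext_on hjdense φ₁.continuous φ₂.continuous heq
    exact ContinuousLinearMap.ext fun y => congrFun hfeq y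
  · rintro p q ⟨u₁, hp1, h₁⟩ ⟨u₂, hq1, h₂⟩
    refine ⟨u₁ + u₂, by simp [hp1, hq1], fun v => ?_⟩
    have e1 := h₁ v
    have e2 := h₂ v
    simp only [map_add, ContinuousLinearMap.add_apply, Prod.fst_add, Prod.snd_add, hp1, hq1]
    rw [← e1, ← e2]; ring
  · rintro k p ⟨u, hp1, h⟩
    refine ⟨k • u, by simp [hp1], fun v => ?_⟩
    have e := h v
    simp only [map_smul, ContinuousLinearMap.smul_apply, Prod.smul_fst, Prod.smul_snd, hp1,
      smul_eq_mul]
    rw [← e]; ring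
  · refine IsSeqClosed.isClosed ?_
    intro f q hf hfq
    have hfst : Filter.Tendsto (fun n => (f n).1) Filter.atTop (nhds q.1) :=
      (continuous_fst.tendsto q).comp hfq
    have hsnd : Filter.Tendsto (fun n => (f n).2) Filter.atTop (nhds q.2) :=
      (continuous_snd.tendsto q).comp hfq
    choose u hu1 hu2 using hf
    -- the key identity: a₁ (u n) = (f n).2 ∘ j - d (f n).1
    have hkey : ∀ n, a₁ (u n) = ((f n).2).comp j - d ((f n).1) := by
      intro n
      ext v
      have h := hu2 n v
      simp only [hu1, ContinuousLinearMap.sub_apply, ContinuousLinearMap.coe_comp',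
        Function.comp_apply]
      linear_combination h
    have htend : Filter.Tendsto (fun n => a₁ (u n)) Filter.atTop
        (nhds ((q.2).comp j - d q.1)) := by
      have h1 : Filter.Tendsto (fun n => ((f n).2).comp j) Filter.atTop
          (nhds ((q.2).comp j)) := (((comp_lipschitz j).continuous).tendsto _).comp hsnd
      have h2 : Filter.Tendsto (fun n => d ((f n).1)) Filter.atTop
          (nhds (d q.1)) := (d.continuous.tendsto _).comp hfst
      simpa only [hkey] using h1.sub h2
    -- u is Cauchy by the inf-sup condition
    have hanti : AntilipschitzWith ⟨c, hc.le⟩⁻¹ ⇑a₁ := by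
      refine a₁.antilipschitz_of_bound fun x => ?_
      have h := hinfsup x
      change ‖x‖ ≤ c⁻¹ * ‖a₁ x‖
      rw [inv_mul_eq_div, le_div_iff₀ hc, mul_comm]
      exact h
    have hcs : CauchySeq u := by
      have h1 : Cauchy (Filter.map (⇑a₁ ∘ u) Filter.atTop) := htend.cauchySeq
      have h2 := (hanti.isUniformInducing a₁.uniformContinuous).cauchy_map_iff
        (F := Filter.map u Filter.atTop)
      rw [← Filter.map_map] at h1
      exact h2.mp h1
    obtain ⟨u₀, hu₀⟩ := cauchySeq_tendsto_of_complete hcs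
    have hjulim : Filter.Tendsto (fun n => (f n).1) Filter.atTop (nhds (j u₀)) := by
      have h := (j.continuous.tendsto _).comp hu₀
      simpa only [Function.comp_def, ← hu1] using h
    have hq1 : q.1 = j u₀ := tendsto_nhds_unique hfst hjulim
    refine ⟨u₀, hq1, fun v => ?_⟩
    have hL : Filter.Tendsto (fun n => a₁ (u n) v + d ((f n).1) v) Filter.atTop
        (nhds (a₁ u₀ v + d (j u₀) v)) := by
      have h1 : Filter.Tendsto (fun n => a₁ (u n) v) Filter.atTop (nhds (a₁ u₀ v)) :=
        ((eval_cont_semilinear v).tendsto _).comp ((a₁.continuous.tendsto _).comp hu₀)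
      have h2 : Filter.Tendsto (fun n => d ((f n).1) v) Filter.atTop (nhds (d (j u₀) v)) := by
        have := ((eval_cont_semilinear v).tendsto _).comp ((d.continuous.tendsto _).comp hjulim)
        exact this
      exact h1.add h2
    have hR : Filter.Tendsto (fun n => (f n).2 (j v)) Filter.atTop (nhds (q.2 (j v))) :=
      ((eval_cont_semilinear (j v)).tendsto _).comp hsnd
    have heqn : (fun n => a₁ (u n) v + d ((f n).1) v) = fun n => (f n).2 (j v) := by
      funext n
      have h := hu2 n v
      rw [hu1 n]
      exact h
    rw [heqn] at hL
    exact tendsto_nhds_unique hL hR
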